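/- Let r > 1 be a real number and n ≥ 2 an integer. For x ∈ [1,r]^n define Conc(x) = (min over all permutations σ of {1,…,n} of Σ_{j=1}^n r^{j−1} x_{σ(j)}) − Σ_{j=1}^{n−1} r^j (this is the concave envelope of the multilinear monomial over [1,r]^n). Then the maximum over x ∈ [1,r]^n of Conc(x) − ∏_{j=1}^n x_j equals E_{r,n} := 1 + ((r^n − 1)/(r − 1)) · [ ((n−1)/n) · ((r^n − 1)/(n(r−1)))^{1/(n−1)} − 1 ], and this maximum is attained only at points of the form t·1 with 1 < t < r (1 denoting the all-ones vector). -/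

import Mathlib

open Finset Real

/-- Bernoulli-type: `1 + n(u-1) ≤ u^n` for `u ≥ 0`, with equality iff `u = 1` (n ≥ 2). -/
lemma aux_bernoulli {n : ℕ} (hn : 2 ≤ n) {u : ℝ} (hu : 0 ≤ u) :
    1 + n * (u - 1) ≤ u ^ n ∧ (1 + n * (u - 1) = u ^ n → u = 1) := by
  have hgeom : (∑ i ∈ range n, u ^ i) * (u - 1) = u ^ n - 1 := geom_sum_mul u n
  have key : u ^ n - (1 + n * (u - 1)) = (u - 1) * ((∑ i ∈ range n, u ^ i) - n) := by
    have hcard : ((range n).card : ℝ) = n := by simp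
    rw [mul_comm (u - 1), sub_mul, hgeom]; ring
  have h1n : 1 ∈ range n := by simp; omega
  rcases lt_trichotomy u 1 with h | h | h
  · have hsum : (∑ i ∈ range n, u ^ i) < n := by
      calc (∑ i ∈ range n, u ^ i) < ∑ _i ∈ range n, (1:ℝ) := by
            apply Finset.sum_lt_sum
            · intro i _; exact pow_le_one₀ hu h.le
            · exact ⟨1, h1n, by simpa using h⟩
        _ = n := by simp
    have hpos : 0 < (u - 1) * ((∑ i ∈ range n, u ^ i) - n) :=
      mul_pos_of_neg_of_neg (by linarith) (by linarith)
    constructor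
    · nlinarith [key]
    · intro he; nlinarith [key]
  · subst h; simp
  · have hsum : (n : ℝ) < (∑ i ∈ range n, u ^ i) := by
      calc (n:ℝ) = ∑ _i ∈ range n, (1:ℝ) := by simp
        _ < ∑ i ∈ range n, u ^ i := by
            apply Finset.sum_lt_sum
            · intro i _; exact one_le_pow₀ h.le
            · exact ⟨1, h1n, by simpa using h⟩
    have hpos : 0 < (u - 1) * ((∑ i ∈ range n, u ^ i) - n) :=
      mul_pos (by linarith) (by linarith)
    constructor
    · nlinarith [key]
    · intro he; nlinarith [key]

/-- The function `t ↦ S t - t^n` with `S = n c^(n-1)` is maximized exactly at `t = c`. -/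
lemma aux_phi {n : ℕ} (hn : 2 ≤ n) {S c t : ℝ} (hc : 0 < c)
    (hS : S = n * c ^ (n - 1)) (ht : 0 ≤ t) :
    S * t - t ^ n ≤ S * c - c ^ n ∧ (S * t - t ^ n = S * c - c ^ n → t = c) := by
  set u : ℝ := t / c with hu
  have hu0 : 0 ≤ u := div_nonneg ht hc.le
  have htu : t = c * u := by rw [hu]; exact (mul_div_cancel₀ _ hc.ne').symm
  have hcn : c ^ (n - 1) * c = c ^ n := by
    rw [← pow_succ]; congr 1; omega
  have hb := aux_bernoulli hn hu0
  have hexp : S * t - t ^ n = c ^ n * (n * u - u ^ n) := by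
    rw [htu, hS, mul_pow, ← hcn]; ring
  have hexp2 : S * c - c ^ n = c ^ n * ((n : ℝ) - 1) := by
    rw [hS, ← hcn]; ring
  have hcnpos : 0 < c ^ n := pow_pos hc n
  constructor
  · rw [hexp, hexp2]
    have := hb.1
    nlinarith
  · intro he
    rw [hexp, hexp2] at he
    have h2 : (n : ℝ) * u - u ^ n = (n : ℝ) - 1 := by
      have := mul_left_cancel₀ (ne_of_gt hcnpos) he
      linarith [this]
    have : u = 1 := hb.2 (by linarith)
    rw [htu, this, mul_one]

/-- Chebyshev-type: monotone `w`, monotone `c`, `∑ c = 0` implies `0 ≤ ∑ w c`. -/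
lemma aux_cheb {n : ℕ} (hn : 0 < n) {w c : Fin n → ℝ} (hw : Monotone w) (hc : Monotone c)
    (hsum : ∑ j, c j = 0) : 0 ≤ ∑ j, w j * c j := by
  have hmono : MonovaryOn w c (Finset.univ : Finset (Fin n)) :=
    (hw.monovary hc).monovaryOn _
  have h := hmono.sum_mul_sum_le_card_mul_sum
  rw [hsum, mul_zero] at h
  have hcard : (0:ℝ) < (Finset.univ : Finset (Fin n)).card := by
    simp [Finset.card_univ]; positivity
  nlinarith

/-- Key inequality: for antitone `y` with `1 ≤ y j ≤ r` and `t^n = ∏ y`,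
`∑ r^j y_j ≤ (∑ r^j) t` with equality iff `y` is constant `t`. -/
lemma aux_key {n : ℕ} (hn : 2 ≤ n) {r : ℝ} (hr : 1 < r) {y : Fin n → ℝ}
    (hy1 : ∀ j, 1 ≤ y j) (hyr : ∀ j, y j ≤ r) (hanti : Antitone y)
    {t : ℝ} (ht : 0 < t) (htn : t ^ n = ∏ j, y j) :
    (∑ j : Fin n, r ^ (j : ℕ) * y j) ≤ (∑ j : Fin n, r ^ (j : ℕ)) * t ∧
      ((∑ j : Fin n, r ^ (j : ℕ) * y j) = (∑ j : Fin n, r ^ (j : ℕ)) * t →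
        ∀ j, y j = t) := by
  have hr0 : (0:ℝ) < r := by linarith
  have hy0 : ∀ j, (0:ℝ) < y j := fun j => lt_of_lt_of_le one_pos (hy1 j)
  set w : Fin n → ℝ := fun j => r ^ (j : ℕ) * y j with hw
  set c : Fin n → ℝ := fun j => Real.log t - Real.log (y j) with hc
  have hwmono : Monotone w := by
    intro i j hij
    rcases eq_or_lt_of_le hij with h | h
    · rw [h]
    · have hij' : (i : ℕ) + 1 ≤ (j : ℕ) := h
      calc r ^ (i : ℕ) * y i ≤ r ^ (i : ℕ) * r := by
            exact mul_le_mul_of_nonneg_left (hyr i) (by positivity)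
        _ = r ^ ((i : ℕ) + 1) := by ring
        _ ≤ r ^ (j : ℕ) := pow_le_pow_right₀ hr.le hij'
        _ ≤ r ^ (j : ℕ) * y j := le_mul_of_one_le_right (by positivity) (hy1 j)
  have hcmono : Monotone c := by
    intro i j hij
    have := Real.log_le_log (hy0 j) (hanti hij)
    simp only [hc]
    linarith
  have hcsum : ∑ j, c j = 0 := by
    have hlogprod : Real.log (∏ j, y j) = ∑ j, Real.log (y j) :=
      Real.log_prod (fun j _ => (hy0 j).ne')
    have hlogt : Real.log (t ^ n) = n * Real.log t := by rw [Real.log_pow]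
    simp only [hc, Finset.sum_sub_distrib, Finset.sum_const, Finset.card_univ,
      Fintype.card_fin, nsmul_eq_mul]
    rw [← hlogprod, ← htn, hlogt]
    ring
  have hcheb : 0 ≤ ∑ j, w j * c j := aux_cheb (by omega) hwmono hcmono hcsum
  -- termwise: w j * c j ≤ r^j * (t - y j), equality iff y j = t
  have hterm : ∀ j, w j * c j ≤ r ^ (j : ℕ) * (t - y j) := by
    intro j
    have hlog : Real.log (t / y j) ≤ t / y j - 1 :=
      Real.log_le_sub_one_of_pos (div_pos ht (hy0 j))
    have hld : Real.log (t / y j) = Real.log t - Real.log (y j) :=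
      Real.log_div ht.ne' (hy0 j).ne'
    have h2 : y j * (Real.log t - Real.log (y j)) ≤ t - y j := by
      rw [← hld]
      have := mul_le_mul_of_nonneg_left hlog (hy0 j).le
      calc y j * Real.log (t / y j) ≤ y j * (t / y j - 1) := this
        _ = t - y j := by rw [mul_sub, mul_one, mul_div_cancel₀ _ (hy0 j).ne']
    calc w j * c j = r ^ (j : ℕ) * (y j * (Real.log t - Real.log (y j))) := by
          simp only [hw, hc]; ring
      _ ≤ r ^ (j : ℕ) * (t - y j) := mul_le_mul_of_nonneg_left h2 (by positivity)
  have hsum2 : ∑ j, w j * c j ≤ ∑ j : Fin n, r ^ (j : ℕ) * (t - y j) :=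
    Finset.sum_le_sum (fun j _ => hterm j)
  have hexpand : ∑ j : Fin n, r ^ (j : ℕ) * (t - y j)
      = (∑ j : Fin n, r ^ (j : ℕ)) * t - ∑ j : Fin n, r ^ (j : ℕ) * y j := by
    rw [Finset.sum_mul, ← Finset.sum_sub_distrib]
    congr 1; ext j; ring
  constructor
  · nlinarith [hcheb, hsum2, hexpand]
  · intro he j
    -- each term of (r^j (t - y j) - w j c j) is nonneg and the sum is 0
    have hz : ∑ j : Fin n, (r ^ (j : ℕ) * (t - y j) - w j * c j) = 0 := by
      rw [Finset.sum_sub_distrib, hexpand, he]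
      have h0 : ∑ j, w j * c j = 0 := by
        have : ∑ j : Fin n, r ^ (j : ℕ) * (t - y j) = 0 := by rw [hexpand, he]; ring
        have := hsum2.trans_eq this
        linarith
      rw [h0]; ring
    have hzz := (Finset.sum_eq_zero_iff_of_nonneg
      (fun j _ => sub_nonneg.mpr (hterm j))).mp hz j (Finset.mem_univ j)
    -- from r^j (t - y j) = w j c j conclude y j = t
    by_contra hne
    have hne' : t / y j ≠ 1 := by
      intro h1
      exact hne ((div_eq_one_iff_eq (hy0 j).ne').mp h1).symm
    have hlog : Real.log (t / y j) < t / y j - 1 :=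
      Real.log_lt_sub_one_of_pos (div_pos ht (hy0 j)) hne'
    have hld : Real.log (t / y j) = Real.log t - Real.log (y j) :=
      Real.log_div ht.ne' (hy0 j).ne'
    have h2 : y j * (Real.log t - Real.log (y j)) < t - y j := by
      rw [← hld]
      have := mul_lt_mul_of_pos_left hlog (hy0 j)
      calc y j * Real.log (t / y j) < y j * (t / y j - 1) := this
        _ = t - y j := by rw [mul_sub, mul_one, mul_div_cancel₀ _ (hy0 j).ne']
    have : w j * c j < r ^ (j : ℕ) * (t - y j) := by
      have := mul_lt_mul_of_pos_left h2 (show (0:ℝ) < r ^ (j : ℕ) by positivity)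
      calc w j * c j = r ^ (j : ℕ) * (y j * (Real.log t - Real.log (y j))) := by
            simp only [hw, hc]; ring
        _ < r ^ (j : ℕ) * (t - y j) := this
    linarith [hzz, this]

/-- Main pointwise bound with equality case. -/
lemma aux_main {n : ℕ} (hn : 2 ≤ n) {r : ℝ} (hr : 1 < r) {x : Fin n → ℝ}
    (hx : x ∈ Set.Icc (1 : Fin n → ℝ) (fun _ => r)) {tstar : ℝ} (htstar : 0 < tstar)
    (hS : (∑ j : Fin n, r ^ (j : ℕ)) = n * tstar ^ (n - 1)) :
    (⨅ σ : Equiv.Perm (Fin n), ∑ j : Fin n, r ^ (j : ℕ) * x (σ j)) - ∏ j, x j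
      ≤ (∑ j : Fin n, r ^ (j : ℕ)) * tstar - tstar ^ n ∧
    ((⨅ σ : Equiv.Perm (Fin n), ∑ j : Fin n, r ^ (j : ℕ) * x (σ j)) - ∏ j, x j
      = (∑ j : Fin n, r ^ (j : ℕ)) * tstar - tstar ^ n → ∀ j, x j = tstar) := by
  obtain ⟨hx1, hxr⟩ := hx
  have hx1' : ∀ j, 1 ≤ x j := fun j => hx1 j
  have hxr' : ∀ j, x j ≤ r := fun j => hxr j
  have hx0 : ∀ j, (0:ℝ) < x j := fun j => lt_of_lt_of_le one_pos (hx1' j)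
  set σ₀ : Equiv.Perm (Fin n) := Fin.revPerm.trans (Tuple.sort x) with hσ₀
  set y : Fin n → ℝ := fun j => x (σ₀ j) with hy
  have hanti : Antitone y := by
    intro i j hij
    have : Fin.rev j ≤ Fin.rev i := Fin.rev_le_rev.mpr hij
    exact Tuple.monotone_sort x this
  have hprod : ∏ j, y j = ∏ j, x j := Equiv.prod_comp σ₀ x
  have hprodpos : (0:ℝ) < ∏ j, x j := Finset.prod_pos (fun j _ => hx0 j)
  set t : ℝ := (∏ j, x j) ^ ((n:ℝ)⁻¹) with hts
  have ht : 0 < t := Real.rpow_pos_of_pos hprodpos _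
  have htn : t ^ n = ∏ j, y j := by
    rw [hprod.symm] at *
    rw [hts, Real.rpow_inv_natCast_pow hprodpos.le (by omega)]
  have key := aux_key hn hr (fun j => hx1' (σ₀ j)) (fun j => hxr' (σ₀ j)) hanti ht htn
  have hinf_le : (⨅ σ : Equiv.Perm (Fin n), ∑ j : Fin n, r ^ (j : ℕ) * x (σ j))
      ≤ ∑ j : Fin n, r ^ (j : ℕ) * y j :=
    ciInf_le (Finite.bddBelow_range _) σ₀
  have hphi := aux_phi hn htstar hS ht.le
  have htprod : ∏ j, x j = t ^ n := by rw [htn, hprod]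
  constructor
  · calc (⨅ σ : Equiv.Perm (Fin n), ∑ j : Fin n, r ^ (j : ℕ) * x (σ j)) - ∏ j, x j
        ≤ (∑ j : Fin n, r ^ (j : ℕ) * y j) - ∏ j, x j := by linarith
      _ ≤ (∑ j : Fin n, r ^ (j : ℕ)) * t - t ^ n := by
          rw [htprod]; linarith [key.1]
      _ ≤ (∑ j : Fin n, r ^ (j : ℕ)) * tstar - tstar ^ n := hphi.1
  · intro he
    have h1 : (∑ j : Fin n, r ^ (j : ℕ) * y j) = (∑ j : Fin n, r ^ (j : ℕ)) * t := by
      rw [htprod] at he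
      have := key.1
      have := hphi.1
      linarith
    have h2 : (∑ j : Fin n, r ^ (j : ℕ)) * t - t ^ n
        = (∑ j : Fin n, r ^ (j : ℕ)) * tstar - tstar ^ n := by
      rw [htprod] at he
      linarith [key.1, hphi.1]
    have hteq : t = tstar := hphi.2 h2
    have hyt := key.2 h1
    intro j
    have : x (σ₀ (σ₀.symm j)) = t := hyt (σ₀.symm j)
    rwa [Equiv.apply_symm_apply, hteq] at this

/-- Concave envelope error of the multilinear monomial over `[1,r]^n`. -/
theorem stmt4 (n : ℕ) (hn : 2 ≤ n) (r : ℝ) (hr : 1 < r)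
    (Conc : (Fin n → ℝ) → ℝ)
    (hConc : ∀ x, Conc x =
      (⨅ σ : Equiv.Perm (Fin n), ∑ j : Fin n, r ^ (j : ℕ) * x (σ j)) - ∑ j ∈ Finset.Ico 1 n, r ^ j)
    (E : ℝ)
    (hE : E = 1 + (r ^ n - 1) / (r - 1) *
      (((n : ℝ) - 1) / n * ((r ^ n - 1) / (n * (r - 1))) ^ ((1 : ℝ) / ((n : ℝ) - 1)) - 1)) :
    IsGreatest ((fun x => Conc x - ∏ j, x j) '' Set.Icc (1 : Fin n → ℝ) (fun _ => r)) E ∧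
    ∀ x ∈ Set.Icc (1 : Fin n → ℝ) (fun _ => r),
      Conc x - ∏ j, x j = E → ∃ t : ℝ, 1 < t ∧ t < r ∧ x = fun _ => t := by
  have hr0 : (0:ℝ) < r := by linarith
  have hr1 : (0:ℝ) < r - 1 := by linarith
  have hncast : (2:ℝ) ≤ (n:ℝ) := by exact_mod_cast hn
  have hn0 : (0:ℝ) < (n:ℝ) := by linarith
  have hn1 : (0:ℝ) < (n:ℝ) - 1 := by linarith
  set S : ℝ := ∑ j : Fin n, r ^ (j : ℕ) with hSdef
  have hrange : S = ∑ j ∈ Finset.range n, r ^ j := Fin.sum_univ_eq_sum_range (fun j => r ^ j) n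
  have hSform : S = (r ^ n - 1) / (r - 1) := by
    rw [hrange, geom_sum_eq (by linarith) n]
  have hIco : ∑ j ∈ Finset.Ico 1 n, r ^ j = S - 1 := by
    have hsplit : ∑ j ∈ Finset.range n, r ^ j = r ^ 0 + ∑ j ∈ Finset.Ico 1 n, r ^ j := by
      rw [Finset.range_eq_Ico]
      exact Finset.sum_eq_sum_Ico_succ_bot (by omega) _
    rw [hrange, hsplit]; norm_num
  set q : ℝ := (r ^ n - 1) / (n * (r - 1)) with hqdef
  have hq : q = S / n := by
    rw [hqdef, hSform, div_div, mul_comm]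
  have hSlb : (n:ℝ) < S := by
    rw [hrange]
    calc (n:ℝ) = ∑ _j ∈ Finset.range n, (1:ℝ) := by simp
      _ < ∑ j ∈ Finset.range n, r ^ j := by
          apply Finset.sum_lt_sum
          · intro i _; exact one_le_pow₀ hr.le
          · exact ⟨1, by simp; omega, by simpa using hr⟩
  have hSub : S < n * r ^ (n - 1) := by
    rw [hrange]
    calc ∑ j ∈ Finset.range n, r ^ j < ∑ _j ∈ Finset.range n, r ^ (n - 1) := by
          apply Finset.sum_lt_sum
          · intro i hi
            exact pow_le_pow_right₀ hr.le (by simp at hi; omega)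
          · refine ⟨0, by simp; omega, ?_⟩
            simpa using one_lt_pow₀ hr (by omega)
      _ = n * r ^ (n - 1) := by simp [mul_comm]
  have hq0 : 0 < q := by rw [hq]; exact div_pos (lt_trans hn0 hSlb) hn0
  have hq1 : 1 < q := by rw [hq]; rw [lt_div_iff₀ hn0]; linarith
  set tstar : ℝ := q ^ ((1:ℝ) / ((n:ℝ) - 1)) with htsdef
  have htstar0 : 0 < tstar := Real.rpow_pos_of_pos hq0 _
  have hpow : tstar ^ (n - 1) = q := by
    rw [htsdef, ← Real.rpow_natCast (q ^ ((1:ℝ) / ((n:ℝ) - 1))) (n - 1), ← Real.rpow_mul hq0.le]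
    rw [show (((n - 1 : ℕ)) : ℝ) = (n:ℝ) - 1 by push_cast [Nat.cast_sub (by omega : 1 ≤ n)]; ring]
    rw [one_div, inv_mul_cancel₀ hn1.ne', Real.rpow_one]
  have htstar1 : 1 < tstar := by
    rw [htsdef, Real.one_lt_rpow_iff_of_pos hq0]
    exact Or.inl ⟨hq1, div_pos one_pos hn1⟩
  have htstarr : tstar < r := by
    apply lt_of_pow_lt_pow_left₀ (n - 1) hr0.le
    rw [hpow, hq, div_lt_iff₀ hn0]
    linarith [hSub]
  have hS : S = n * tstar ^ (n - 1) := by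
    rw [hpow, hq]; field_simp
  have htn : tstar ^ n = S / n * tstar := by
    rw [← hq, ← hpow, ← pow_succ]
    congr 1
    omega
  have hE2 : E = S * tstar - tstar ^ n - (S - 1) := by
    rw [hE, ← hSform, htn]
    field_simp
    ring
  constructor
  · constructor
    · -- membership: attained at the constant vector tstar
      refine ⟨fun _ => tstar, ⟨fun j => htstar1.le, fun j => htstarr.le⟩, ?_⟩
      show Conc (fun _ => tstar) - ∏ _j : Fin n, tstar = E
      rw [hConc, hIco]
      have hval : ∀ σ : Equiv.Perm (Fin n),
          ∑ j : Fin n, r ^ (j : ℕ) * ((fun _ => tstar) (σ j)) = S * tstar := by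
        intro σ; rw [hSdef, Finset.sum_mul]
      have hinf : (⨅ σ : Equiv.Perm (Fin n),
          ∑ j : Fin n, r ^ (j : ℕ) * ((fun _ => tstar) (σ j))) = S * tstar := by
        have := funext hval
        rw [show (fun σ : Equiv.Perm (Fin n) => ∑ j : Fin n, r ^ (j : ℕ) * ((fun _ => tstar) (σ j))) = fun _ => S * tstar from funext hval]
        exact ciInf_const
      rw [hinf]
      have hprodconst : ∏ _j : Fin n, tstar = tstar ^ n := by
        simp [Finset.prod_const]
      rw [hprodconst, hE2]
      ring
    · -- upper bound
      rintro e ⟨x, hx, rfl⟩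
      have h := (aux_main hn hr hx htstar0 hS).1
      simp only [hConc, hIco]
      rw [hE2]
      linarith
  · -- equality case
    intro x hx heq
    rw [hConc, hIco, hE2] at heq
    have h := (aux_main hn hr hx htstar0 hS).2 (by linarith)
    exact ⟨tstar, htstar1, htstarr, funext h⟩
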